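/- Let G be a cartesian comonad on a category E with finite limits. If E is locally cartesian closed, then the category E_G of G-coalgebras is locally cartesian closed. -/

import Mathlib

open CategoryTheory CategoryTheory.Limits

universe w w' v u

variable {E : Type u} [Category.{v} E]

/-- A category with finite limits is locally cartesian closed if every pullback functor
`f* : E/J ⥤ E/I` has a right adjoint (pushforward). -/
def IsLCC (E : Type u) [Category.{v} E] [HasFiniteLimits E] : Prop :=
  ∀ ⦃I J : E⦄ (f : I ⟶ J), (Over.pullback f).IsLeftAdjoint

instance coalgebraHasColimitsOfShape (G : Comonad E) {J : Type w} [Category.{w'} J]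
    [HasColimitsOfShape J E] : HasColimitsOfShape J G.Coalgebra :=
  ⟨fun D => Comonad.hasColimit_of_comp_forget_hasColimit D⟩

instance coalgebraHasLimitsOfShape (G : Comonad E) {J : Type w} [Category.{w'} J]
    [HasLimitsOfShape J E] [PreservesLimitsOfShape J G.toFunctor] :
    HasLimitsOfShape J G.Coalgebra :=
  ⟨fun D => Comonad.forget_creates_limits_of_comonad_preserves D⟩

instance coalgebraHasFiniteLimits (G : Comonad E) [HasFiniteLimits E]
    [PreservesFiniteLimits G.toFunctor] : HasFiniteLimits G.Coalgebra :=
  ⟨fun _ _ _ => inferInstance⟩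

namespace CoalgLCC

universe v₁ u₁ u₂

variable {C : Type u₁} {D : Type u₂} [Category.{v₁} C] [Category.{v₁} D]
variable {F : C ⥤ D} {G : D ⥤ C}

/-- An adjunction `F ⊣ G` induces an adjunction between slices:
`Over (G Y) ⥤ Over Y` (via `post F` then composing with the counit) is left adjoint
to `post G`. -/
def postAdjCore (adj : F ⊣ G) (Y : D) :
    (Over.post F ⋙ Over.map (adj.counit.app Y) : Over (G.obj Y) ⥤ Over Y) ⊣ Over.post G :=
  Adjunction.mkOfUnitCounit
    { unit :=
      { app := fun a => Over.homMk (adj.unit.app a.left) (by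
          change adj.unit.app a.left ≫ G.map (F.map a.hom ≫ adj.counit.app Y) = a.hom
          rw [Functor.map_comp, ← Functor.comp_map F G]
          erw [← adj.unit.naturality_assoc a.hom]
          simp [adj.right_triangle_components] )
        naturality := fun a b φ => by
          ext
          exact adj.unit.naturality φ.left }
      counit :=
      { app := fun b => Over.homMk (adj.counit.app b.left) (by
          change adj.counit.app b.left ≫ b.hom = F.map (G.map b.hom) ≫ adj.counit.app Y
          simpa using (adj.counit.naturality b.hom).symm )
        naturality := fun a b φ => by
          ext
          exact adj.counit.naturality φ.left }
      left_triangle := by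
        ext a
        change F.map (adj.unit.app a.left) ≫ (𝟙 _ ≫ adj.counit.app (F.obj a.left)) = 𝟙 _
        simpa using adj.left_triangle_components a.left
      right_triangle := by
        ext b
        change adj.unit.app (G.obj b.left) ≫ (𝟙 _ ≫ G.map (adj.counit.app b.left)) = 𝟙 _
        simpa using adj.right_triangle_components b.left }

/-- The easy natural isomorphism `Over.map η_X ⋙ (post F ⋙ map ε_{FX}) ≅ post F`. -/
def postTriangleIso (adj : F ⊣ G) (X : C) :
    Over.map (adj.unit.app X) ⋙ (Over.post F ⋙ Over.map (adj.counit.app (F.obj X)))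
      ≅ (Over.post F : Over X ⥤ Over (F.obj X)) :=
  NatIso.ofComponents
    (fun a => Over.isoMk (Iso.refl _) (by
      change 𝟙 _ ≫ F.map a.hom = F.map (a.hom ≫ adj.unit.app X) ≫ adj.counit.app (F.obj X)
      simp))
    (fun φ => by ext; change F.map φ.left ≫ 𝟙 _ = 𝟙 _ ≫ F.map φ.left; simp)

/-- An adjunction `F ⊣ G` induces an adjunction `post F ⊣ post G ⋙ pullback η_X`
when `C` has pullbacks. -/
noncomputable def postAdj [HasPullbacks C] (adj : F ⊣ G) (X : C) :
    (Over.post F : Over X ⥤ Over (F.obj X)) ⊣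
      (Over.post G ⋙ Over.pullback (adj.unit.app X)) :=
  (((Over.mapPullbackAdj (adj.unit.app X)).comp (postAdjCore adj (F.obj X))).ofNatIsoLeft
    (postTriangleIso adj X))

instance postIsLeftAdjoint [HasPullbacks C] [F.IsLeftAdjoint] (X : C) :
    (Over.post F (X := X)).IsLeftAdjoint :=
  ⟨_, ⟨postAdj (Adjunction.ofIsLeftAdjoint F) X⟩⟩

instance postReflectsIsomorphisms (F : C ⥤ D) (X : C) [F.ReflectsIsomorphisms] :
    (Over.post F (X := X)).ReflectsIsomorphisms where
  reflects φ hφ := by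
    have h1 : IsIso (F.map ((Over.forget X).map φ)) :=
      show IsIso ((Over.forget (F.obj X)).map ((Over.post F).map φ)) from inferInstance
    have h2 : IsIso ((Over.forget X).map φ) := isIso_of_reflects_iso _ F
    exact isIso_of_reflects_iso φ (Over.forget X)

instance postPreservesParallelPair (F : C ⥤ D) (X : C)
    [PreservesLimitsOfShape WalkingParallelPair F]
    [HasLimitsOfShape WalkingParallelPair C] :
    PreservesLimitsOfShape WalkingParallelPair (Over.post F (X := X)) := by
  have h1 : PreservesLimitsOfShape WalkingParallelPair (Over.forget X) :=
    preservesLimitOfShape_of_createsLimitsOfShape_and_hasLimitsOfShape _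
  have h2 : PreservesLimitsOfShape WalkingParallelPair
      (Over.post F (X := X) ⋙ Over.forget (F.obj X)) := by
    have heq : Over.post F (X := X) ⋙ Over.forget (F.obj X) = Over.forget X ⋙ F := rfl
    rw [heq]
    exact comp_preservesLimitsOfShape _ _
  exact preservesLimitsOfShape_of_reflects_of_preserves _ (Over.forget (F.obj X))

instance postPreservesCoreflexive (F : C ⥤ D) (X : C)
    [PreservesLimitsOfShape WalkingParallelPair F]
    [HasLimitsOfShape WalkingParallelPair C] :
    Comonad.PreservesLimitOfIsCoreflexivePair (Over.post F (X := X)) :=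
  ⟨fun _ _ _ => inferInstance⟩

/-- If `F` is a left adjoint which reflects isomorphisms and preserves equalizers,
then `Over.post F` is comonadic. -/
noncomputable def postComonadic (adj : F ⊣ G) (X : C)
    [HasPullbacks C] [HasCoreflexiveEqualizers (Over X)] [F.ReflectsIsomorphisms]
    [PreservesLimitsOfShape WalkingParallelPair F] [HasLimitsOfShape WalkingParallelPair C] :
    ComonadicLeftAdjoint (Over.post F (X := X)) :=
  Comonad.comonadicOfHasPreservesCoreflexiveEqualizersOfReflectsIsomorphisms (postAdj adj X)

/-- `Over.post` commutes with `Over.pullback` when `F` preserves pullbacks. -/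
noncomputable def postPullbackIso (F : C ⥤ D) [HasPullbacks C] [HasPullbacks D]
    [PreservesLimitsOfShape WalkingCospan F] {X Y : C} (f : X ⟶ Y) :
    Over.post F (X := Y) ⋙ Over.pullback (F.map f) ≅ Over.pullback f ⋙ Over.post F :=
  NatIso.ofComponents
    (fun b => Over.isoMk ((PreservesPullback.iso F b.hom f).symm) (by
      change (PreservesPullback.iso F b.hom f).inv ≫ F.map (pullback.snd b.hom f) =
        pullback.snd (F.map b.hom) (F.map f)
      simp))
    (fun φ => by
      ext
      rename_i b₁ b₂
      change pullback.lift (pullback.fst _ _ ≫ F.map φ.left) (pullback.snd _ _)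
            (by rw [Category.assoc, ← F.map_comp, Over.w φ, pullback.condition]) ≫
          (PreservesPullback.iso F b₂.hom f).inv =
        (PreservesPullback.iso F b₁.hom f).inv ≫
          F.map (pullback.lift (pullback.fst _ _ ≫ φ.left) (pullback.snd _ _)
            (by rw [Category.assoc, Over.w φ, pullback.condition]))
      rw [Iso.comp_inv_eq]
      apply pullback.hom_ext
      · simp only [Category.assoc, PreservesPullback.iso_hom_fst, ← F.map_comp, pullback.lift_fst]
        simp [F.map_comp, PreservesPullback.iso_inv_fst_assoc]
      · simp only [Category.assoc, PreservesPullback.iso_hom_snd, ← F.map_comp, pullback.lift_snd]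
        simp [PreservesPullback.iso_inv_snd])

end CoalgLCC

/-- for a cartesian comonad `G` on a locally cartesian closed category `E`,
the category `E_G` of `G`-coalgebras is locally cartesian closed. -/
theorem coalgebras_locally_cartesian_closed [HasFiniteLimits E] (G : Comonad E)
    [PreservesFiniteLimits G.toFunctor] (hlcc : IsLCC E) :
    IsLCC G.Coalgebra := by
  intro I J f
  haveI : PreservesLimitsOfShape WalkingParallelPair G.forget :=
    preservesLimitOfShape_of_createsLimitsOfShape_and_hasLimitsOfShape _
  haveI : PreservesLimitsOfShape WalkingCospan G.forget :=
    preservesLimitOfShape_of_createsLimitsOfShape_and_hasLimitsOfShape _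
  letI : ComonadicLeftAdjoint (Over.post G.forget (X := I)) :=
    CoalgLCC.postComonadic G.adj I
  haveI : (Over.pullback (G.forget.map f)).IsLeftAdjoint := hlcc (G.forget.map f)
  exact isLeftAdjoint_square_lift_comonadic (Over.pullback f) (Over.post G.forget)
    (Over.post G.forget) (Over.pullback (G.forget.map f))
    (CoalgLCC.postPullbackIso G.forget f)
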